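/- Let m ≥ 1 and k ∈ {±1}^m with ∏_{j=1}^m k_j = 1, and let a^k(φ) be the associated symbol matrix. Then there is a polynomial p of degree m, independent of φ, such that det(a^k(φ) − λ I_m) = (−1)^m ( p(λ) − 2cos(φ) ) for all φ ∈ [0,2π). Consequently, the set { λ ∈ ℂ : det(a^k(φ) − λ I_m) = 0 for some φ ∈ [0,2π) } equals p⁻¹([−2,2]). -/

import Mathlib

open Complex Matrix

/-- The symbol matrix `a^k(φ) ∈ ℂ^{m×m}` of an `m`-periodic tridiagonal sign operator:
superdiagonal entries `1`, subdiagonal entries `k₁,…,k_{m-1}` (here `k 0, …, k (m-2)`),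
corner entries `k_m e^{iφ}` at position `(1,m)` and `e^{-iφ}` at position `(m,1)`.
The entries are defined as sums so that for small `m` overlapping positions add up
(e.g. for `m = 1` the matrix is `(k₁ e^{iφ} + e^{-iφ})`). -/
noncomputable def symb (m : ℕ) (k : ℕ → ℂ) (φ : ℝ) : Matrix (Fin m) (Fin m) ℂ :=
  Matrix.of fun r c =>
    (if (c : ℕ) = (r : ℕ) + 1 then 1 else 0) +
    (if (r : ℕ) = (c : ℕ) + 1 then k c else 0) +
    (if (r : ℕ) = 0 ∧ (c : ℕ) = m - 1 then k c * Complex.exp (φ * Complex.I) else 0) +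
    (if (r : ℕ) = m - 1 ∧ (c : ℕ) = 0 then Complex.exp (-φ * Complex.I) else 0)

namespace DetSymbAux

/-- The cornerless tridiagonal matrix `B = tridiag − λI`. -/
noncomputable def B (m : ℕ) (k : ℕ → ℂ) (lam : ℂ) : Matrix (Fin m) (Fin m) ℂ :=
  Matrix.of fun r c =>
    (if (c : ℕ) = (r : ℕ) + 1 then 1 else 0) +
    (if (r : ℕ) = (c : ℕ) + 1 then k c else 0) -
    (if r = c then lam else 0)

lemma charpoly_eval {m : ℕ} (M : Matrix (Fin m) (Fin m) ℂ) (x : ℂ) :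
    M.charpoly.eval x = (x • (1 : Matrix (Fin m) (Fin m) ℂ) - M).det := by
  rw [Matrix.charpoly, ← Polynomial.coe_evalRingHom, RingHom.map_det]
  congr 1
  ext i j
  by_cases h : i = j <;>
    simp [charmatrix_apply, Matrix.one_apply, h, Matrix.diagonal_apply, Matrix.smul_apply]

lemma updateRow_comm {m : ℕ} (M : Matrix (Fin m) (Fin m) ℂ) {i j : Fin m} (h : i ≠ j)
    (u v : Fin m → ℂ) :
    updateRow (updateRow M i u) j v = updateRow (updateRow M j v) i u := by
  ext r c
  rcases eq_or_ne r i with rfl | hri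
  · simp [Matrix.updateRow_apply, h, h.symm]
  · rcases eq_or_ne r j with rfl | hrj
    · simp [Matrix.updateRow_apply, h, h.symm]
    · simp [Matrix.updateRow_apply, hri, hrj]

lemma single_eq_smul {m : ℕ} [NeZero m] (i : Fin m) (a : ℂ) :
    (Pi.single i a : Fin m → ℂ) = a • (Pi.single i 1 : Fin m → ℂ) := by
  ext c
  by_cases h : c = i <;> simp [Pi.single_apply, h]

end DetSymbAux

namespace DetSymbAux

lemma symb_decomp (n : ℕ) (hn : 0 < n) (k : ℕ → ℂ) (φ : ℝ) (lam : ℂ) :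
    symb (n+1) k φ - lam • 1 =
      updateRow (updateRow (B (n+1) k lam) 0
          (B (n+1) k lam 0 + Pi.single (Fin.last n) (k n * Complex.exp (φ * Complex.I))))
        (Fin.last n)
        (B (n+1) k lam (Fin.last n) + Pi.single 0 (Complex.exp (-φ * Complex.I))) := by
  have hne : ¬ (0 : ℕ) = n := fun h => hn.ne' h.symm
  have h0l : (0 : Fin (n+1)) ≠ Fin.last n := by
    intro h
    have := congrArg Fin.val h
    simp at this
    omega
  ext r c
  rcases eq_or_ne r (Fin.last n) with rfl | hrl
  · simp only [Matrix.updateRow_self, Matrix.sub_apply, Matrix.smul_apply, Matrix.one_apply,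
      symb, B, Matrix.of_apply, Pi.add_apply, Pi.single_apply, Fin.ext_iff, Fin.val_last,
      Fin.val_zero, Nat.add_sub_cancel, hne, hn.ne', false_and, if_false, true_and, smul_eq_mul,
      mul_ite, mul_one, mul_zero]
    split_ifs <;> first | ring | omega
  · rw [Matrix.updateRow_ne hrl]
    rcases eq_or_ne r 0 with rfl | hr0
    · simp only [Matrix.updateRow_self, Matrix.sub_apply, Matrix.smul_apply, Matrix.one_apply,
        symb, B, Matrix.of_apply, Pi.add_apply, Pi.single_apply, Fin.ext_iff, Fin.val_last,
        Fin.val_zero, Nat.add_sub_cancel, hne, hn.ne', false_and, if_false, true_and, smul_eq_mul,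
        mul_ite, mul_one, mul_zero]
      by_cases hc : (c : ℕ) = n
      · have hkc : k (c : ℕ) = k n := by rw [hc]
        simp only [hc, hkc, if_true]
        split_ifs <;> first | ring | omega
      · simp only [hc, if_false]
        split_ifs <;> first | ring1 | omega | (simp <;> congr)
    · rw [Matrix.updateRow_ne hr0]
      have hr0' : (r : ℕ) ≠ 0 := fun h => hr0 (Fin.ext h)
      have hrl' : (r : ℕ) ≠ n := fun h => hrl (Fin.ext (by simp [h]))
      simp only [Matrix.sub_apply, Matrix.smul_apply, Matrix.one_apply, symb, B,
        Matrix.of_apply, Nat.add_sub_cancel, hr0', hrl', false_and, if_false, smul_eq_mul,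
        mul_ite, mul_one, mul_zero]
      split_ifs <;> first | ring | omega


lemma det_expand (n : ℕ) (hn : 0 < n) (k : ℕ → ℂ) (lam : ℂ) (a b : ℂ) :
    det (updateRow (updateRow (B (n+1) k lam) 0
          (B (n+1) k lam 0 + Pi.single (Fin.last n) a))
        (Fin.last n) (B (n+1) k lam (Fin.last n) + Pi.single 0 b)) =
      det (B (n+1) k lam)
      + a * det (updateRow (B (n+1) k lam) 0 (Pi.single (Fin.last n) 1))
      + b * (det (updateRow (B (n+1) k lam) (Fin.last n) (Pi.single 0 1))
          + a * det (updateRow (updateRow (B (n+1) k lam) (Fin.last n) (Pi.single 0 1)) 0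
              (Pi.single (Fin.last n) 1))) := by
  have h0l : (0 : Fin (n+1)) ≠ Fin.last n := by
    intro h
    have := congrArg Fin.val h
    simp at this
    omega
  set Bm := B (n+1) k lam with hBm
  set u : Fin (n+1) → ℂ := Bm 0 + Pi.single (Fin.last n) a with hu
  rw [Matrix.det_updateRow_add]
  have e1 : updateRow (updateRow Bm 0 u) (Fin.last n) (Bm (Fin.last n)) =
      updateRow Bm 0 u := by
    conv_lhs => rw [show Bm (Fin.last n) = (updateRow Bm 0 u) (Fin.last n) from
      (Matrix.updateRow_ne h0l.symm).symm]
    exact Matrix.updateRow_eq_self _ _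
  rw [e1]
  rw [hu, Matrix.det_updateRow_add]
  rw [Matrix.updateRow_eq_self]
  rw [single_eq_smul (Fin.last n) a, Matrix.det_updateRow_smul]
  rw [single_eq_smul (0 : Fin (n+1)) b, Matrix.det_updateRow_smul]
  congr 1
  rw [updateRow_comm _ h0l]
  rw [Matrix.det_updateRow_add]
  have e2 : updateRow (updateRow Bm (Fin.last n) (Pi.single 0 1)) 0 (Bm 0) =
      updateRow Bm (Fin.last n) (Pi.single 0 1) := by
    conv_lhs => rw [show Bm 0 = (updateRow Bm (Fin.last n) (Pi.single 0 1)) 0 from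
      (Matrix.updateRow_ne h0l).symm]
    exact Matrix.updateRow_eq_self _ _
  rw [e2, Matrix.det_updateRow_smul]

lemma D1_val (n : ℕ) (k : ℕ → ℂ) (lam : ℂ) :
    det (updateRow (B (n+1) k lam) 0 (Pi.single (Fin.last n) 1)) =
      (-1) ^ n * ∏ j ∈ Finset.range n, k j := by
  rw [Matrix.det_succ_row_zero]
  rw [Fintype.sum_eq_single (Fin.last n) (fun j hj => by
    simp [Matrix.updateRow_self, Pi.single_apply, hj])]
  have hA0 : (updateRow (B (n+1) k lam) 0 (Pi.single (Fin.last n) 1)) 0 (Fin.last n) = 1 := by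
    simp [Matrix.updateRow_self]
  rw [hA0, Fin.val_last]
  have htri : ((updateRow (B (n+1) k lam) 0 (Pi.single (Fin.last n) 1)).submatrix
      Fin.succ (Fin.last n).succAbove).BlockTriangular id := by
    intro i j hij
    have hij' : (j : ℕ) < (i : ℕ) := hij
    simp only [Matrix.submatrix_apply, Fin.succAbove_last]
    rw [Matrix.updateRow_ne (Fin.succ_ne_zero i)]
    simp only [B, Matrix.of_apply, Fin.val_succ, Fin.coe_castSucc]
    rw [if_neg (by omega), if_neg (by omega), if_neg (by
      intro h
      have := congrArg Fin.val h
      simp at this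
      omega)]
    ring
  rw [Matrix.det_of_upperTriangular htri]
  have hdiag : ∀ i : Fin n, ((updateRow (B (n+1) k lam) 0 (Pi.single (Fin.last n) 1)).submatrix
      Fin.succ (Fin.last n).succAbove) i i = k i := by
    intro i
    simp only [Matrix.submatrix_apply, Fin.succAbove_last]
    rw [Matrix.updateRow_ne (Fin.succ_ne_zero i)]
    simp only [B, Matrix.of_apply, Fin.val_succ, Fin.coe_castSucc]
    have h3 : ¬ (i.succ = i.castSucc) := by
      intro h
      have := congrArg Fin.val h
      simp at this
    have h2 : ¬ ((i:ℕ) = (i:ℕ) + 1 + 1) := by omega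
    simp [h2, h3]
  calc (-1 : ℂ) ^ n * 1 * ∏ i : Fin n, ((updateRow (B (n+1) k lam) 0
        (Pi.single (Fin.last n) 1)).submatrix Fin.succ (Fin.last n).succAbove) i i
      = (-1) ^ n * ∏ i : Fin n, k i := by
        rw [mul_one]
        congr 1
        exact Finset.prod_congr rfl fun i _ => hdiag i
    _ = (-1) ^ n * ∏ j ∈ Finset.range n, k j := by
        rw [Fin.prod_univ_eq_prod_range]

lemma D2_val (n : ℕ) (hn : 0 < n) (k : ℕ → ℂ) (lam : ℂ) :
    det (updateRow (B (n+1) k lam) (Fin.last n) (Pi.single 0 1)) = (-1) ^ n := by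
  rw [Matrix.det_succ_row _ (Fin.last n)]
  rw [Fintype.sum_eq_single (0 : Fin (n+1)) (fun j hj => by
    simp [Matrix.updateRow_self, Pi.single_apply, hj])]
  have hA0 : (updateRow (B (n+1) k lam) (Fin.last n) (Pi.single 0 1)) (Fin.last n) 0 = 1 := by
    simp [Matrix.updateRow_self]
  rw [hA0, Fin.val_last, Fin.val_zero, Nat.add_zero]
  have hrow : ∀ i : Fin n, (i.castSucc : Fin (n+1)) ≠ Fin.last n :=
    fun i => (Fin.castSucc_lt_last i).ne
  have htri : ((updateRow (B (n+1) k lam) (Fin.last n) (Pi.single 0 1)).submatrix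
      (Fin.last n).succAbove (0 : Fin (n+1)).succAbove).BlockTriangular OrderDual.toDual := by
    intro i j hij
    have hij' : (i : ℕ) < (j : ℕ) := hij
    simp only [Matrix.submatrix_apply, Fin.succAbove_last, Fin.succAbove_zero]
    rw [Matrix.updateRow_ne (hrow i)]
    simp only [B, Matrix.of_apply, Fin.coe_castSucc, Fin.val_succ]
    rw [if_neg (by omega), if_neg (by omega), if_neg (by
      intro h
      have := congrArg Fin.val h
      simp at this
      omega)]
    ring
  rw [Matrix.det_of_lowerTriangular _ htri]
  have hdiag : ∀ i : Fin n, ((updateRow (B (n+1) k lam) (Fin.last n) (Pi.single 0 1)).submatrix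
      (Fin.last n).succAbove (0 : Fin (n+1)).succAbove) i i = 1 := by
    intro i
    simp only [Matrix.submatrix_apply, Fin.succAbove_last, Fin.succAbove_zero]
    rw [Matrix.updateRow_ne (hrow i)]
    simp only [B, Matrix.of_apply, Fin.coe_castSucc, Fin.val_succ]
    have h3 : ¬ (i.castSucc = i.succ) := by
      intro h
      have := congrArg Fin.val h
      simp at this
    have h2 : ¬ ((i:ℕ) = (i:ℕ) + 1 + 1) := by omega
    simp [h2, h3]
  rw [Finset.prod_congr rfl fun i _ => hdiag i]
  simp

lemma key (n : ℕ) (k : ℕ → ℂ)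
    (hprod : ∏ j ∈ Finset.range (n+1), k j = 1) (φ : ℝ) (lam : ℂ) :
    det (symb (n+1) k φ - lam • 1) =
      det (symb (n+1) k 0 - lam • 1) +
        (-1) ^ n * (Complex.exp (φ * Complex.I) + Complex.exp (-φ * Complex.I) - 2) := by
  rcases Nat.eq_zero_or_pos n with rfl | hn
  · have hk0 : k 0 = 1 := by simpa using hprod
    have h1 : ∀ (ψ : ℝ), det (symb 1 k ψ - lam • 1) =
        Complex.exp (ψ * Complex.I) + Complex.exp (-ψ * Complex.I) - lam := by
      intro ψ
      rw [show (symb 1 k ψ - lam • 1).det = (symb 1 k ψ - lam • 1) 0 0 from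
        Matrix.det_fin_one _]
      simp [symb, Matrix.sub_apply, Matrix.smul_apply, Matrix.one_apply, hk0]
      try ring
    rw [h1, h1]
    simp
    try ring
  · rw [symb_decomp n hn k φ lam, symb_decomp n hn k 0 lam,
      det_expand n hn, det_expand n hn, D1_val, D2_val n hn]
    have hkn : (∏ j ∈ Finset.range n, k j) * k n = 1 := by
      rw [← Finset.prod_range_succ]; exact hprod
    have he : Complex.exp (φ * Complex.I) * Complex.exp (-φ * Complex.I) = 1 := by
      rw [← Complex.exp_add, show (φ : ℂ) * Complex.I + -φ * Complex.I = 0 by ring,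
        Complex.exp_zero]
    simp only [Complex.ofReal_zero, zero_mul, neg_zero, Complex.exp_zero]
    set D3 := det (updateRow (updateRow (B (n+1) k lam) (Fin.last n) (Pi.single 0 1)) 0
      (Pi.single (Fin.last n) 1)) with hD3
    linear_combination ((-1 : ℂ)^n * (Complex.exp (φ * Complex.I) - 1)) * hkn +
      (k n * D3) * he

end DetSymbAux

/-- If `∏ⱼ kⱼ = 1` there is a polynomial `p` of degree `m`, independent of `φ`,
with `det(a^k(φ) − λIₘ) = (−1)^m (p(λ) − 2cos φ)`; consequently
`{λ : det(a^k(φ) − λIₘ) = 0 for some φ ∈ [0,2π)} = p⁻¹([−2,2])`. -/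
theorem det_symb_eq_of_prod_one (m : ℕ) (hm : 1 ≤ m) (k : ℕ → ℂ)
    (hk : ∀ i < m, k i = 1 ∨ k i = -1)
    (hprod : ∏ j ∈ Finset.range m, k j = 1) :
    ∃ p : Polynomial ℂ, p.natDegree = m ∧
      (∀ (φ : ℝ) (lam : ℂ),
        (symb m k φ - lam • 1).det = (-1) ^ m * (p.eval lam - 2 * Real.cos φ)) ∧
      {lam : ℂ | ∃ φ ∈ Set.Ico (0 : ℝ) (2 * Real.pi), (symb m k φ - lam • 1).det = 0} =
        {lam : ℂ | ∃ x ∈ Set.Icc (-2 : ℝ) 2, p.eval lam = (x : ℂ)} := by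
  obtain ⟨n, rfl⟩ : ∃ n, m = n + 1 := ⟨m - 1, by omega⟩
  set p : Polynomial ℂ := (symb (n+1) k 0).charpoly + Polynomial.C 2 with hp
  have hdeg : p.natDegree = n + 1 := by
    rw [hp, Polynomial.natDegree_add_C, Matrix.charpoly_natDegree_eq_dim]
    simp
  have hform : ∀ (φ : ℝ) (lam : ℂ),
      (symb (n+1) k φ - lam • 1).det = (-1) ^ (n+1) * (p.eval lam - 2 * Real.cos φ) := by
    intro φ lam
    have h0 : det (symb (n+1) k 0 - lam • 1) =
        (-1) ^ (n+1) * ((symb (n+1) k 0).charpoly.eval lam) := by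
      rw [show symb (n+1) k 0 - lam • 1 = -(lam • 1 - symb (n+1) k 0) from (neg_sub _ _).symm,
        Matrix.det_neg, DetSymbAux.charpoly_eval]
      simp
    have hcos : Complex.exp (φ * Complex.I) + Complex.exp (-φ * Complex.I) =
        2 * ((Real.cos φ : ℝ) : ℂ) := by
      rw [Complex.ofReal_cos]
      exact (Complex.two_cos _).symm
    rw [DetSymbAux.key n k hprod φ lam, h0, hcos, hp]
    simp only [Polynomial.eval_add, Polynomial.eval_C, pow_succ]
    ring
  refine ⟨p, hdeg, hform, ?_⟩
  ext lam
  simp only [Set.mem_setOf_eq]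
  constructor
  · rintro ⟨φ, hφ, h0⟩
    rw [hform φ lam] at h0
    have h2 : p.eval lam - 2 * (Real.cos φ : ℂ) = 0 := by
      rcases mul_eq_zero.mp h0 with h | h
      · exact absurd h (by simp)
      · exact h
    rw [sub_eq_zero] at h2
    refine ⟨2 * Real.cos φ, Set.mem_Icc.mpr ⟨by nlinarith [Real.neg_one_le_cos φ],
      by nlinarith [Real.cos_le_one φ]⟩, ?_⟩
    rw [h2]
    push_cast
    ring
  · rintro ⟨x, hx, hpx⟩
    rw [Set.mem_Icc] at hx
    refine ⟨Real.arccos (x/2), Set.mem_Ico.mpr ⟨Real.arccos_nonneg _,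
      lt_of_le_of_lt (Real.arccos_le_pi _) (by linarith [Real.pi_pos])⟩, ?_⟩
    rw [hform]
    rw [Real.cos_arccos (by linarith [hx.1]) (by linarith [hx.2]), hpx]
    push_cast
    ring
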